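/- Let f : P_m → P_n be holomorphic with f(0) = 0 and fix l ∈ {1,...,m}. For nonzero v = (0,...,0,v^l,0,...,0) ∈ C^m, equality F̃_{t̃,k̃}^2(0; df(0)v) = ((n + t̃ n^{1/k̃})/(1+t̃)) · F_{t,k}^2(0;v) holds if and only if f_j(0,...,0,z^l,0,...,0) = e^{iθ_j} z^l for some real θ_j, for every j = 1,...,n. -/

import Mathlib

def polydisc (m : ℕ) : Set (Fin m → ℂ) := {z | ∀ l, ‖z l‖ < 1}

noncomputable def FSq (m : ℕ) (t : ℝ) (k : ℕ) (z v : Fin m → ℂ) : ℝ :=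
  (1/(1+t)) * (∑ l, ‖v l‖^2 / (1 - ‖z l‖^2)^2
    + t * (∑ l, ‖v l‖^(2*k) / (1 - ‖z l‖^2)^(2*k)) ^ ((1:ℝ)/k))

open Metric Set

lemma rpow_pow_inv (x : ℝ) (hx : 0 ≤ x) (k : ℕ) (hk : k ≠ 0) :
    (x ^ k) ^ ((1:ℝ)/k) = x := by
  rw [← Real.rpow_natCast x k, ← Real.rpow_mul hx, mul_one_div,
    div_self (by exact_mod_cast hk : (k:ℝ) ≠ 0), Real.rpow_one]

lemma FSq_zero (n : ℕ) (t : ℝ) (k : ℕ) (v : Fin n → ℂ) :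
    FSq n t k 0 v = (1/(1+t)) * ((∑ j, ‖(v j)‖^2)
      + t * (∑ j, ‖(v j)‖^(2*k)) ^ ((1:ℝ)/k)) := by
  simp [FSq]

lemma sum_abs_single_pow {m : ℕ} (l : Fin m) (d : ℂ) (p : ℕ) (hp : p ≠ 0) :
    ∑ i, ‖((Pi.single l d : Fin m → ℂ) i)‖ ^ p = ‖d‖ ^ p := by
  rw [Fintype.sum_eq_single l (fun i hi => by rw [Pi.single_eq_of_ne hi]; simp [zero_pow hp]),
    Pi.single_eq_same]

lemma single_eq_smul {m : ℕ} (l : Fin m) (d : ℂ) :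
    (Pi.single l d : Fin m → ℂ) = d • (Pi.single l 1 : Fin m → ℂ) := by
  funext i
  by_cases h : i = l
  · subst h; simp
  · simp [Pi.single_eq_of_ne h]

lemma mem_polydisc_single {m : ℕ} (l : Fin m) (w : ℂ) (hw : ‖w‖ < 1) :
    Pi.single l w ∈ polydisc m := by
  intro i
  by_cases h : i = l
  · subst h; simpa using hw
  · simp [Pi.single_eq_of_ne h]

lemma polydisc_open (m : ℕ) : IsOpen (polydisc m) := by
  have : polydisc m = ⋂ i, (fun z : Fin m → ℂ => z i) ⁻¹' (ball 0 1) := by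
    ext z
    simp [polydisc, mem_ball_zero_iff]
  rw [this]
  exact isOpen_iInter_of_finite fun i => isOpen_ball.preimage (continuous_apply i)

lemma key_sum_iff (n kt : ℕ) (hkt : kt ≠ 0) (tt : ℝ) (htt : 0 ≤ tt)
    (b : Fin n → ℝ) (hb0 : ∀ j, 0 ≤ b j) (hb1 : ∀ j, b j ≤ 1) :
    (∑ j, b j ^ 2) + tt * (∑ j, b j ^ (2*kt)) ^ ((1:ℝ)/kt)
      = n + tt * (n:ℝ) ^ ((1:ℝ)/kt) ↔ ∀ j, b j = 1 := by
  constructor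
  · intro heq
    have hA : (∑ j, b j ^ 2) ≤ n := by
      calc (∑ j, b j ^ 2) ≤ ∑ _j : Fin n, (1:ℝ) :=
            Finset.sum_le_sum fun j _ => pow_le_one₀ (hb0 j) (hb1 j)
        _ = n := by simp
    have hS : (∑ j, b j ^ (2*kt)) ≤ n := by
      calc (∑ j, b j ^ (2*kt)) ≤ ∑ _j : Fin n, (1:ℝ) :=
            Finset.sum_le_sum fun j _ => pow_le_one₀ (hb0 j) (hb1 j)
        _ = n := by simp
    have hSnn : 0 ≤ ∑ j, b j ^ (2*kt) := Finset.sum_nonneg fun j _ => pow_nonneg (hb0 j) _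
    have hB : (∑ j, b j ^ (2*kt)) ^ ((1:ℝ)/kt) ≤ (n:ℝ) ^ ((1:ℝ)/kt) :=
      Real.rpow_le_rpow hSnn hS (by positivity)
    have hA' : (∑ j, b j ^ 2) = n := by nlinarith [mul_le_mul_of_nonneg_left hB htt]
    have hzero : ∑ j, ((1:ℝ) - b j ^ 2) = 0 := by
      rw [Finset.sum_sub_distrib]
      simp [hA']
    intro j
    have h1 : (1:ℝ) - b j ^ 2 = 0 :=
      (Finset.sum_eq_zero_iff_of_nonneg fun i _ => by
        nlinarith [hb0 i, hb1 i]).mp hzero j (Finset.mem_univ j)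
    have h2 : (b j - 1) * (b j + 1) = 0 := by nlinarith
    rcases mul_eq_zero.mp h2 with h | h
    · linarith
    · nlinarith [hb0 j]
  · intro h
    simp [h]

section G
variable {m n : ℕ} (f : (Fin m → ℂ) → (Fin n → ℂ)) (l : Fin m) (j : Fin n)

lemma g_diff (hf : DifferentiableOn ℂ f (polydisc m)) :
    DifferentiableOn ℂ (fun w : ℂ => f (Pi.single l w) j) (ball 0 1) := by
  have hsd : Differentiable ℂ (fun w : ℂ => (Pi.single l w : Fin m → ℂ)) := by
    have : (fun w : ℂ => (Pi.single l w : Fin m → ℂ))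
        = fun w : ℂ => w • (Pi.single l 1 : Fin m → ℂ) := funext fun w => single_eq_smul l w
    rw [this]
    exact differentiable_id.smul_const _
  have h1 : DifferentiableOn ℂ (fun w : ℂ => f (Pi.single l w)) (ball 0 1) := by
    refine hf.comp hsd.differentiableOn ?_
    intro w hw
    exact mem_polydisc_single l w (by simpa [mem_ball_zero_iff] using hw)
  exact fun w hw => (differentiableWithinAt_pi.mp (h1 w hw)) j

lemma g_maps (hmaps : ∀ z ∈ polydisc m, f z ∈ polydisc n) :
    MapsTo (fun w : ℂ => f (Pi.single l w) j) (ball 0 1) (ball 0 1) := by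
  intro w hw
  have := hmaps _ (mem_polydisc_single l w
    (by simpa [mem_ball_zero_iff] using hw)) j
  simpa [mem_ball_zero_iff] using this

lemma g_zero (h0 : f 0 = 0) : (fun w : ℂ => f (Pi.single l w) j) 0 = 0 := by
  simp [Pi.single_zero, h0]

lemma g_deriv (hfat : DifferentiableAt ℂ f 0) :
    deriv (fun w : ℂ => f (Pi.single l w) j) 0 = fderiv ℂ f 0 (Pi.single l 1) j := by
  set A : ℂ →L[ℂ] (Fin m → ℂ) :=
    ContinuousLinearMap.smulRight (1 : ℂ →L[ℂ] ℂ) (Pi.single l 1) with hA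
  have heqA : (fun w : ℂ => (Pi.single l w : Fin m → ℂ)) = ⇑A := by
    funext w
    simp [hA, single_eq_smul l w]
  have hAd : HasFDerivAt (fun w : ℂ => (Pi.single l w : Fin m → ℂ)) A 0 := by
    rw [heqA]; exact A.hasFDerivAt
  have hf0' : HasFDerivAt f (fderiv ℂ f 0) ((fun w : ℂ => (Pi.single l w : Fin m → ℂ)) 0) := by
    simpa [Pi.single_zero] using hfat.hasFDerivAt
  have hcomp : HasFDerivAt (fun w : ℂ => f (Pi.single l w)) ((fderiv ℂ f 0).comp A) 0 :=
    hf0'.comp 0 hAd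
  have hproj : HasFDerivAt (fun w : ℂ => f (Pi.single l w) j)
      ((ContinuousLinearMap.proj (R := ℂ) (φ := fun _ : Fin n => ℂ) j).comp
        ((fderiv ℂ f 0).comp A)) 0 :=
    (ContinuousLinearMap.proj (R := ℂ) (φ := fun _ : Fin n => ℂ) j).hasFDerivAt.comp 0 hcomp
  have := hproj.hasDerivAt.deriv
  simpa [hA] using this

end G

lemma schwarz_bound' {g : ℂ → ℂ} (hgd : DifferentiableOn ℂ g (ball 0 1))
    (hgm : MapsTo g (ball 0 1) (ball 0 1)) (hg0 : g 0 = 0) :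
    ‖(deriv g 0)‖ ≤ 1 :=
  Complex.norm_deriv_le_one_of_mapsTo_ball hgd (by rw [hg0]; exact hgm.mono_right ball_subset_closedBall) one_pos

lemma schwarz_eq' {g : ℂ → ℂ} (hgd : DifferentiableOn ℂ g (ball 0 1))
    (hgm : MapsTo g (ball 0 1) (ball 0 1)) (hg0 : g 0 = 0)
    (habs : ‖(deriv g 0)‖ = 1) :
    ∀ w : ℂ, ‖w‖ < 1 → g w = deriv g 0 * w := by
  intro w hw
  have hm : MapsTo g (ball 0 1) (closedBall (g 0) 1) := by rw [hg0]; exact hgm.mono_right ball_subset_closedBall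
  have h_eq : ‖dslope g 0 0‖ = 1 / 1 := by
    rw [dslope_same, habs]; norm_num
  have := Complex.affine_of_mapsTo_ball_of_exists_norm_dslope_eq_div hgd hm
    (mem_ball_self one_pos) h_eq
    (mem_ball_zero_iff.mpr (by simpa using hw))
  simp only [hg0, dslope_same, sub_zero, zero_add, smul_eq_mul] at this
  rw [this]; ring

lemma rotation_exists {g : ℂ → ℂ} (hgd : DifferentiableOn ℂ g (ball 0 1))
    (hgm : MapsTo g (ball 0 1) (ball 0 1)) (hg0 : g 0 = 0)
    (habs : ‖(deriv g 0)‖ = 1) :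
    ∃ θ : ℝ, ∀ w : ℂ, ‖w‖ < 1 → g w = Complex.exp (θ * Complex.I) * w := by
  refine ⟨(deriv g 0).arg, fun w hw => ?_⟩
  have h := Complex.norm_mul_exp_arg_mul_I (deriv g 0)
  rw [habs] at h
  simp only [Complex.ofReal_one, one_mul] at h
  rw [schwarz_eq' hgd hgm hg0 habs w hw, h]

lemma deriv_of_rotation {g : ℂ → ℂ} {θ : ℝ}
    (h : ∀ w : ℂ, ‖w‖ < 1 → g w = Complex.exp (θ * Complex.I) * w) :
    deriv g 0 = Complex.exp (θ * Complex.I) := by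
  have hev : g =ᶠ[nhds 0] (fun w => Complex.exp (θ * Complex.I) * w) := by
    filter_upwards [Metric.ball_mem_nhds (0:ℂ) one_pos] with w hw
    exact h w (by simpa [mem_ball_zero_iff] using hw)
  rw [hev.deriv_eq]
  have := ((hasDerivAt_id (0:ℂ)).const_mul (Complex.exp (θ * Complex.I))).deriv
  simpa using this

/-- For `f : P_m → P_n` holomorphic with `f 0 = 0` and a vector `v`
supported in the `l`-th coordinate, equality in the Schwarz lemma at the origin holds
iff `f_j(0,...,z^l,...,0) = e^{iθⱼ} z^l` for each `j`. -/
theorem schwarz_FSq_equality_iff (m n : ℕ) (t tt : ℝ) (ht : 0 ≤ t) (htt : 0 ≤ tt)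
    (k kt : ℕ) (hk : 2 ≤ k) (hkt : 2 ≤ kt)
    (f : (Fin m → ℂ) → (Fin n → ℂ))
    (hf : DifferentiableOn ℂ f (polydisc m))
    (hmaps : ∀ z ∈ polydisc m, f z ∈ polydisc n)
    (h0 : f 0 = 0) (l : Fin m) (c : ℂ) (hc : c ≠ 0) :
    FSq n tt kt 0 (fderiv ℂ f 0 (Pi.single l c))
        = ((n + tt * (n:ℝ) ^ ((1:ℝ)/kt))/(1+tt)) * FSq m t k 0 (Pi.single l c) ↔
      ∀ j : Fin n, ∃ θ : ℝ, ∀ w : ℂ, ‖w‖ < 1 →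
        f (Pi.single l w) j = Complex.exp (θ * Complex.I) * w := by
  have hfat : DifferentiableAt ℂ f 0 :=
    hf.differentiableAt ((polydisc_open m).mem_nhds (fun i => by simp))
  have hvec : ∀ j, fderiv ℂ f 0 (Pi.single l c) j
      = c * fderiv ℂ f 0 (Pi.single l 1) j := by
    intro j
    rw [single_eq_smul l c, map_smul]
    simp
  have habsle : ∀ j, ‖(fderiv ℂ f 0 (Pi.single l 1) j)‖ ≤ 1 := by
    intro j
    rw [← g_deriv f l j hfat]
    exact schwarz_bound' (g_diff f l j hf) (g_maps f l j hmaps) (g_zero f l j h0)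
  have h1tt : (0:ℝ) < 1 + tt := by linarith
  have hCpos : (0:ℝ) < ‖c‖ ^ 2 := pow_pos (norm_pos_iff.mpr hc) 2
  have hL : FSq n tt kt 0 (fderiv ℂ f 0 (Pi.single l c))
      = (1/(1+tt)) * (‖c‖ ^ 2
          * (∑ j, ‖(fderiv ℂ f 0 (Pi.single l 1) j)‖ ^ 2)
        + tt * (‖c‖ ^ 2
          * (∑ j, ‖(fderiv ℂ f 0 (Pi.single l 1) j)‖ ^ (2*kt)) ^ ((1:ℝ)/kt))) := by
    have h1 : ∑ j, ‖(fderiv ℂ f 0 (Pi.single l c) j)‖ ^ 2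
        = ‖c‖ ^ 2 * ∑ j, ‖(fderiv ℂ f 0 (Pi.single l 1) j)‖ ^ 2 := by
      rw [Finset.mul_sum]
      exact Finset.sum_congr rfl fun j _ => by rw [hvec j, norm_mul, mul_pow]
    have h2 : ∑ j, ‖(fderiv ℂ f 0 (Pi.single l c) j)‖ ^ (2*kt)
        = (‖c‖ ^ 2) ^ kt
          * ∑ j, ‖(fderiv ℂ f 0 (Pi.single l 1) j)‖ ^ (2*kt) := by
      rw [Finset.mul_sum]
      exact Finset.sum_congr rfl fun j _ => by rw [hvec j, norm_mul, mul_pow, pow_mul]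
    rw [FSq_zero, h1, h2,
      Real.mul_rpow (by positivity)
        (Finset.sum_nonneg fun j _ => pow_nonneg (norm_nonneg _) _),
      rpow_pow_inv (‖c‖ ^ 2) (by positivity) kt (by omega)]
  have hR : FSq m t k 0 (Pi.single l c) = ‖c‖ ^ 2 := by
    rw [FSq_zero, sum_abs_single_pow l c 2 (by norm_num),
      sum_abs_single_pow l c (2*k) (by omega), pow_mul,
      rpow_pow_inv _ (by positivity) k (by omega)]
    have h1t : (1:ℝ) + t ≠ 0 := by positivity
    field_simp
  rw [hL, hR]
  have hstep : ∀ X Y N : ℝ,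
      ((1/(1+tt)) * (‖c‖ ^ 2 * X + tt * (‖c‖ ^ 2 * Y))
        = (N/(1+tt)) * (‖c‖ ^ 2) ↔ X + tt * Y = N) := by
    intro X Y N
    rw [show (1/(1+tt)) * (‖c‖ ^ 2 * X + tt * (‖c‖ ^ 2 * Y))
        = (X + tt * Y) * ‖c‖ ^ 2 * (1/(1+tt)) from by ring,
      show (N/(1+tt)) * (‖c‖ ^ 2) = N * ‖c‖ ^ 2 * (1/(1+tt)) from by ring,
      mul_left_inj' (one_div_ne_zero h1tt.ne'), mul_left_inj' hCpos.ne']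
  rw [hstep, key_sum_iff n kt (by omega) tt htt _
    (fun j => norm_nonneg _) habsle]
  constructor
  · intro h j
    exact rotation_exists (g_diff f l j hf) (g_maps f l j hmaps) (g_zero f l j h0)
      (by rw [g_deriv f l j hfat]; exact h j)
  · intro h j
    obtain ⟨θ, hθ⟩ := h j
    have hd := deriv_of_rotation (g := fun w : ℂ => f (Pi.single l w) j) hθ
    rw [← g_deriv f l j hfat, hd]
    exact Complex.norm_exp_ofReal_mul_I θ
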